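/- Let D be a nonempty compact set, f1, f2 : D → ℝ continuous with f2(x) > 0 on D, and let η* = max_{x ∈ D} f1(x)/f2(x), attained at x*. Then max_{x ∈ D}(f1(x) − η*·f2(x)) = 0 and this maximum is attained at x*. -/
import Mathlib


open Set

theorem stmt_4 {X : Type*} [TopologicalSpace X] (D : Set X)
    (hD : D.Nonempty) (hDc : IsCompact D)
    (f1 f2 : X → ℝ) (hf1 : ContinuousOn f1 D) (hf2 : ContinuousOn f2 D)
    (hf2pos : ∀ x ∈ D, 0 < f2 x)
    (xstar : X) (hx : xstar ∈ D) (ηstar : ℝ)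
    (hηstar : ηstar = f1 xstar / f2 xstar)
    (hmax : ∀ x ∈ D, f1 x / f2 x ≤ f1 xstar / f2 xstar) :
    (∀ x ∈ D, f1 x - ηstar * f2 x ≤ 0) ∧ f1 xstar - ηstar * f2 xstar = 0 := by
  constructor
  · intro x hxD
    have h2 := hf2pos x hxD
    have := hmax x hxD
    rw [div_le_div_iff₀ h2 (hf2pos xstar hx)] at this
    have : f1 x ≤ ηstar * f2 x := by
      rw [hηstar]
      rw [div_mul_eq_mul_div, le_div_iff₀ (hf2pos xstar hx)]
      linarith [mul_comm (f1 x) (f2 xstar)]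
    linarith
  · rw [hηstar, div_mul_cancel₀ _ (hf2pos xstar hx).ne']
    ring
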